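/- arXiv:1902.09445 — 2 statements merged into one kernel-verified Lean document; each statement's English description precedes it below -/
import Mathlib

section
/- Let $c_0, c_1 : \mathbb{N} \to \mathbb{R}$ be nondecreasing functions and $\mu \in \mathbb{R}$. Define a sequence of functions $V_k : \mathbb{N} \to \mathbb{R}$ by choosing $V_0$ nondecreasing and setting $V_{k+1}(h) = \min\{c_1(h) + V_k(0),\; c_0(h) + V_k(h+1)\} - \mu$ for all $h \in \mathbb{N}$. Then for every $k \in \mathbb{N}$, the $k$-step differential value function $V_k$ is nondecreasing in $h$. -/
/-- Every iterate of value iteration for the content-update MDP is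
nondecreasing in the age: if `c0, c1 : ℕ → ℝ` are nondecreasing, `V 0` is a
nondecreasing initial function, and
`V (k+1) h = min (c1 h + V k 0) (c0 h + V k (h+1)) - μ`, then each `V k` is
nondecreasing in `h`. -/
theorem stmt_1 (c0 c1 : ℕ → ℝ) (hc0 : Monotone c0) (hc1 : Monotone c1)
    (μ : ℝ) (V : ℕ → ℕ → ℝ) (hV0 : Monotone (V 0))
    (hrec : ∀ k h, V (k + 1) h = min (c1 h + V k 0) (c0 h + V k (h + 1)) - μ) :
    ∀ k, Monotone (V k) := by
  intro k
  induction k with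
  | zero => exact hV0
  | succ k ih =>
    apply monotone_nat_of_le_succ
    intro h
    rw [hrec k h, hrec k (h + 1)]
    apply sub_le_sub_right
    apply min_le_min
    · exact add_le_add (hc1 (Nat.le_succ h)) le_rfl
    · exact add_le_add (hc0 (Nat.le_succ h)) (ih (Nat.le_succ (h + 1)))
end

section
/- Let $c_0, c_1 : \mathbb{N} \to \mathbb{R}$ be nondecreasing functions and $\mu \in \mathbb{R}$. Define $V_k : \mathbb{N} \to \mathbb{R}$ by choosing $V_0$ nondecreasing and setting $V_{k+1}(h) = \min\{c_1(h) + V_k(0),\; c_0(h) + V_k(h+1)\} - \mu$. Suppose the sequence $(V_k)$ converges pointwise to a function $V : \mathbb{N} \to \mathbb{R}$, i.e., $\lim_{k\to\infty} V_k(h) = V(h)$ for every $h$. Then the limiting differential value function $V$ is nondecreasing in $h$. -/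
/-- The limiting differential value function of value iteration is
nondecreasing: if `c0, c1 : ℕ → ℝ` are nondecreasing, the iterates satisfy
`V (k+1) h = min (c1 h + V k 0) (c0 h + V k (h+1)) - μ` with `V 0`
nondecreasing, and `V k` converges pointwise to `Vlim`, then `Vlim` is
nondecreasing in the age `h`. -/
theorem stmt_2 (c0 c1 : ℕ → ℝ) (hc0 : Monotone c0) (hc1 : Monotone c1)
    (μ : ℝ) (V : ℕ → ℕ → ℝ) (hV0 : Monotone (V 0))
    (hrec : ∀ k h, V (k + 1) h = min (c1 h + V k 0) (c0 h + V k (h + 1)) - μ)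
    (Vlim : ℕ → ℝ)
    (hconv : ∀ h, Filter.Tendsto (fun k => V k h) Filter.atTop (nhds (Vlim h))) :
    Monotone Vlim := by
  have hmono : ∀ k, Monotone (V k) := by
    intro k
    induction k with
    | zero => exact hV0
    | succ k ih =>
      intro a b hab
      rw [hrec, hrec]
      apply sub_le_sub_right
      exact min_le_min (add_le_add_left (hc1 hab) _)
        (add_le_add (hc0 hab) (ih (by omega)))
  intro a b hab
  exact le_of_tendsto_of_tendsto' (hconv a) (hconv b) (fun k => hmono k hab)
end
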